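/- Let (g, φ) be a quadratic Lie algebra over a field K of characteristic zero. Then there exist ideals R and A of g with g = R ⊕ A, φ(R, A) = 0, the restrictions of φ to R and to A nondegenerate, A abelian, and R reduced (i.e. Z(R) ⊆ [R,R]). -/

import Mathlib

/-- The orthogonal complement `{x ∈ L : φ(x,u) = 0 for all u ∈ U}` of a subspace `U`
relative to a bilinear form `φ`. -/
def perp {K L : Type*} [Field K] [AddCommGroup L] [Module K L]
    (φ : L →ₗ[K] L →ₗ[K] K) (U : Submodule K L) : Submodule K L where
  carrier := {x | ∀ u ∈ U, φ x u = 0}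
  add_mem' := by
    intro a b ha hb u hu
    simp [map_add, ha u hu, hb u hu]
  zero_mem' := by
    intro u hu
    simp
  smul_mem' := by
    intro c a ha u hu
    simp [map_smul, ha u hu]

/-- Every quadratic Lie algebra decomposes as an orthogonal direct sum, as ideals, of a
reduced quadratic Lie algebra and an abelian quadratic Lie algebra. -/
theorem quadratic_decomposes_reduced_plus_abelian
    {K : Type*} [Field K] [CharZero K]
    {L : Type*} [LieRing L] [LieAlgebra K L] [FiniteDimensional K L]
    (φ : L →ₗ[K] L →ₗ[K] K)
    (hsymm : ∀ x y : L, φ x y = φ y x)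
    (hnondeg : ∀ x : L, (∀ y : L, φ x y = 0) → x = 0)
    (hinv : ∀ x y z : L, φ ⁅x, y⁆ z = φ x ⁅y, z⁆) :
    ∃ R A : LieIdeal K L,
      -- direct sum of ideals
      LieSubmodule.toSubmodule R ⊔ LieSubmodule.toSubmodule A = ⊤
      ∧ LieSubmodule.toSubmodule R ⊓ LieSubmodule.toSubmodule A = ⊥
      -- orthogonality
      ∧ (∀ x ∈ R, ∀ y ∈ A, φ x y = 0)
      -- both restrictions of φ are nondegenerate
      ∧ LieSubmodule.toSubmodule R ⊓ perp φ (LieSubmodule.toSubmodule R) = ⊥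
      ∧ LieSubmodule.toSubmodule A ⊓ perp φ (LieSubmodule.toSubmodule A) = ⊥
      -- A is abelian
      ∧ (∀ x ∈ A, ∀ y ∈ A, ⁅x, y⁆ = (0 : L))
      -- R is reduced: Z(R) ⊆ [R,R]
      ∧ LieAlgebra.center K R ≤ LieAlgebra.derivedSeries K R 1 := by
  classical
  set Zs : Submodule K L := LieSubmodule.toSubmodule (LieAlgebra.center K L) with hZdef
  have hmemZ : ∀ x : L, x ∈ Zs ↔ ∀ y : L, ⁅x, y⁆ = 0 := by
    intro x
    rw [hZdef]
    constructor
    · intro h y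
      have h' := (LieModule.mem_maxTrivSubmodule K L L x).mp h y
      rw [← lie_skew, h', neg_zero]
    · intro h
      exact (LieModule.mem_maxTrivSubmodule K L L x).mpr fun y => by
        rw [← lie_skew, h y, neg_zero]
  -- derived subalgebra as a span
  have hD1 : LieAlgebra.derivedSeries K L 1 = ⁅(⊤ : LieIdeal K L), (⊤ : LieIdeal K L)⁆ := by
    rw [LieAlgebra.derivedSeries_def, LieAlgebra.derivedSeriesOfIdeal_succ,
      LieAlgebra.derivedSeriesOfIdeal_zero]
  set Ds : Submodule K L := LieSubmodule.toSubmodule (LieAlgebra.derivedSeries K L 1) with hDdef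
  have hDspan : Ds = Submodule.span K {m : L | ∃ y z : L, ⁅y, z⁆ = m} := by
    rw [hDdef, hD1, LieSubmodule.lieIdeal_oper_eq_linear_span]
    congr 1
    ext m
    constructor
    · rintro ⟨x, n, h⟩; exact ⟨x, n, h⟩
    · rintro ⟨y, z, h⟩
      exact ⟨⟨y, LieSubmodule.mem_top y⟩, ⟨z, LieSubmodule.mem_top z⟩, h⟩
  -- x ∈ Z iff φ x vanishes on all brackets
  have hbra_mem : ∀ y z : L, ⁅y, z⁆ ∈ Ds := by
    intro y z
    rw [hDspan]
    exact Submodule.subset_span ⟨y, z, rfl⟩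
  have hZiff : ∀ x : L, x ∈ Zs ↔ ∀ d ∈ Ds, φ x d = 0 := by
    intro x
    constructor
    · intro hx d hd
      rw [hDspan] at hd
      refine Submodule.span_induction (p := fun m _ => φ x m = 0) ?_ ?_ ?_ ?_ hd
      · rintro m ⟨y, z, rfl⟩
        rw [← hinv, (hmemZ x).mp hx y]
        simp
      · simp
      · intro a b _ _ ha hb; rw [map_add, ha, hb, add_zero]
      · intro c a _ ha; rw [map_smul, ha, smul_zero]
    · intro h
      rw [hmemZ]
      intro y
      apply hnondeg
      intro z
      rw [hinv]
      exact h _ (hbra_mem y z)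
  -- Mathlib bilinear form facts
  have hrefl : LinearMap.BilinForm.IsRefl φ := fun x y h => by rw [hsymm]; exact h
  have hnd : LinearMap.BilinForm.Nondegenerate φ :=
    (LinearMap.IsRefl.nondegenerate_iff_separatingLeft hrefl).mpr hnondeg
  have hZs_eq : Zs = LinearMap.BilinForm.orthogonal φ Ds := by
    ext x
    rw [LinearMap.BilinForm.mem_orthogonal_iff, hZiff]
    constructor
    · intro h n hn; have := h n hn; rwa [hsymm]
    · intro h d hd; have := h d hd; rwa [hsymm] at this
  have hDs_eq : LinearMap.BilinForm.orthogonal φ Zs = Ds := by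
    rw [hZs_eq, LinearMap.BilinForm.orthogonal_orthogonal hnd hrefl]
  -- choose complement A0 of Zs ⊓ Ds inside Zs
  obtain ⟨q, hq⟩ := Submodule.exists_isCompl ((Zs ⊓ Ds).comap Zs.subtype)
  set A0 : Submodule K L := q.map Zs.subtype with hA0def
  have hA0_le_Z : A0 ≤ Zs := by
    rw [hA0def]
    intro x hx
    obtain ⟨y, _, rfl⟩ := hx
    exact y.2
  have hA0_inf : A0 ⊓ (Zs ⊓ Ds) = ⊥ := by
    rw [eq_bot_iff]
    rintro x ⟨hx1, hx2⟩
    obtain ⟨y, hy, rfl⟩ := hx1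
    have hy2 : y ∈ (Zs ⊓ Ds).comap Zs.subtype := hx2
    have : y ∈ q ⊓ (Zs ⊓ Ds).comap Zs.subtype := ⟨hy, hy2⟩
    rw [inf_comm, hq.inf_eq_bot, Submodule.mem_bot] at this
    simp [this]
  have hA0_sup : A0 ⊔ (Zs ⊓ Ds) = Zs := by
    have h1 := congrArg (Submodule.map Zs.subtype) hq.sup_eq_top
    rw [Submodule.map_sup, Submodule.map_comap_subtype] at h1
    have h2 : Submodule.map Zs.subtype ⊤ = Zs := Submodule.map_subtype_top Zs
    rw [h2] at h1
    have h3 : Zs ⊓ (Zs ⊓ Ds) = Zs ⊓ Ds := by rw [← inf_assoc, inf_idem]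
    rw [h3] at h1
    rw [sup_comm]
    exact h1
  -- A0 is central
  have hA0Z : ∀ a ∈ A0, ∀ y : L, ⁅a, y⁆ = 0 := fun a ha y => (hmemZ a).mp (hA0_le_Z ha) y
  have hA0Z' : ∀ a ∈ A0, ∀ y : L, ⁅y, a⁆ = 0 := by
    intro a ha y
    rw [← lie_skew, hA0Z a ha y, neg_zero]
  -- A as a Lie ideal
  have hAlie : ∀ {x m : L}, m ∈ A0 → ⁅x, m⁆ ∈ A0 := by
    intro x m hm
    rw [hA0Z' m hm x]
    exact A0.zero_mem
  let A : LieIdeal K L := { A0 with lie_mem := hAlie }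
  have hAcoe : LieSubmodule.toSubmodule A = A0 := rfl
  -- R0 := perp of A0
  set R0 : Submodule K L := perp φ A0 with hR0def
  have hmemR0 : ∀ x : L, x ∈ R0 ↔ ∀ u ∈ A0, φ x u = 0 := fun x => Iff.rfl
  have hRlie : ∀ {y x : L}, x ∈ R0 → ⁅y, x⁆ ∈ R0 := by
    intro y x _
    rw [hmemR0]
    intro u hu
    rw [hinv, hA0Z' u hu x]
    simp
  let R : LieIdeal K L := { R0 with lie_mem := hRlie }
  have hRcoe : LieSubmodule.toSubmodule R = R0 := rfl
  -- key orthogonality facts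
  have hZperpD : ∀ x ∈ Zs, ∀ d ∈ Ds, φ x d = 0 := fun x hx => (hZiff x).mp hx
  have hD_le_R0 : Ds ≤ R0 := by
    intro d hd
    rw [hmemR0]
    intro u hu
    rw [hsymm]
    exact hZperpD u (hA0_le_Z hu) d hd
  -- A0 nondegenerate: A0 ⊓ R0 = ⊥
  have hA0R0 : ∀ a ∈ A0, a ∈ R0 → a = 0 := by
    intro a ha haR
    have haZ : a ∈ Zs := hA0_le_Z ha
    have hperpZ : ∀ z ∈ Zs, φ a z = 0 := by
      intro z hz
      rw [← hA0_sup] at hz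
      obtain ⟨u, hu, w, hw, rfl⟩ := Submodule.mem_sup.mp hz
      rw [map_add, (hmemR0 a).mp haR u hu, hZperpD a haZ w hw.2, add_zero]
    have haD : a ∈ Ds := by
      rw [← hDs_eq]
      intro z hz
      rw [hsymm]
      exact hperpZ z hz
    have : a ∈ A0 ⊓ (Zs ⊓ Ds) := ⟨ha, haZ, haD⟩
    rw [hA0_inf] at this
    simpa using this
  have hinfAR : A0 ⊓ R0 = ⊥ := by
    rw [eq_bot_iff]
    rintro x ⟨h1, h2⟩
    simp [hA0R0 x h1 h2]
  -- R0 = Mathlib orthogonal of A0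
  have hR0_eq : R0 = LinearMap.BilinForm.orthogonal φ A0 := by
    ext x
    rw [hmemR0, LinearMap.BilinForm.mem_orthogonal_iff]
    constructor
    · intro h n hn; rw [hsymm]; exact h n hn
    · intro h u hu; rw [hsymm]; exact h u hu
  have hrestr : LinearMap.BilinForm.Nondegenerate (LinearMap.BilinForm.restrict φ A0) := by
    refine (LinearMap.IsRefl.nondegenerate_iff_separatingLeft
      (B := LinearMap.BilinForm.restrict φ A0)
      (fun (x y : A0) h => (hsymm (y : L) x).trans h)).mpr ?_
    intro m hm
    have : (m : L) = 0 := by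
      apply hA0R0 m m.2
      rw [hmemR0]
      intro u hu
      exact hm ⟨u, hu⟩
    exact Subtype.ext this
  have hcompl : IsCompl A0 (LinearMap.BilinForm.orthogonal φ A0) :=
    LinearMap.BilinForm.isCompl_orthogonal_of_restrict_nondegenerate hrefl hrestr
  have hsup : R0 ⊔ A0 = ⊤ := by
    rw [sup_comm, hR0_eq]
    exact hcompl.sup_eq_top
  -- R0 nondegenerate
  have hR0nd : ∀ x ∈ R0, (∀ u ∈ R0, φ x u = 0) → x = 0 := by
    intro x hx h
    apply hnondeg
    intro y
    have hy : y ∈ R0 ⊔ A0 := by rw [hsup]; trivial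
    obtain ⟨r, hr, a, ha, rfl⟩ := Submodule.mem_sup.mp hy
    rw [map_add, h r hr, (hmemR0 x).mp hx a ha, add_zero]
  refine ⟨R, A, ?_, ?_, ?_, ?_, ?_, ?_, ?_⟩
  · rw [hRcoe, hAcoe]; exact hsup
  · rw [hRcoe, hAcoe, eq_bot_iff]
    rintro x ⟨h1, h2⟩
    simp [hA0R0 x h2 h1]
  · intro x hx y hy
    exact (hmemR0 x).mp hx y hy
  · rw [hRcoe, eq_bot_iff]
    rintro x ⟨h1, h2⟩
    have : x = 0 := hR0nd x h1 fun u hu => h2 u hu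
    simp [this]
  · rw [hAcoe, eq_bot_iff]
    rintro x ⟨h1, h2⟩
    have : x = 0 := hA0R0 x h1 (by rw [hmemR0]; exact fun u hu => h2 u hu)
    simp [this]
  · intro x hx y _
    exact hA0Z x hx y
  · -- reduced
    rintro ⟨x, hx⟩ hcen
    have hxR : x ∈ R0 := hx
    -- x commutes with everything in R0
    have hcomm : ∀ r ∈ R0, ⁅x, r⁆ = (0 : L) := by
      intro r hr
      have h := (LieModule.mem_maxTrivSubmodule K R R (⟨x, hx⟩ : R)).mp hcen ⟨r, hr⟩
      have h2 := congrArg (Subtype.val) h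
      have h3 : (↑(⁅(⟨r, hr⟩ : R), (⟨x, hx⟩ : R)⁆) : L) = ⁅r, x⁆ := rfl
      rw [h3] at h2
      rw [← lie_skew, h2]
      simp
    -- x is central in L
    have hxZ : x ∈ Zs := by
      rw [hmemZ]
      intro y
      have hy : y ∈ R0 ⊔ A0 := by rw [hsup]; trivial
      obtain ⟨r, hr, a, ha, rfl⟩ := Submodule.mem_sup.mp hy
      rw [lie_add, hcomm r hr, hA0Z' a ha x, add_zero]
    -- x ∈ Ds
    have hxD : x ∈ Ds := by
      have : x ∈ A0 ⊔ (Zs ⊓ Ds) := by rw [hA0_sup]; exact hxZ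
      obtain ⟨a, ha, w, hw, rfl⟩ := Submodule.mem_sup.mp this
      have haR : a ∈ R0 := by
        have hwR : w ∈ R0 := hD_le_R0 hw.2
        have : a = (a + w) - w := by abel
        rw [this]
        exact R0.sub_mem hxR hwR
      have : a = 0 := hA0R0 a ha haR
      rw [this, zero_add]
      exact hw.2
    -- transfer to derived series of R
    have hD1R : LieAlgebra.derivedSeries K R 1 = ⁅(⊤ : LieIdeal K R), (⊤ : LieIdeal K R)⁆ := by
      rw [LieAlgebra.derivedSeries_def, LieAlgebra.derivedSeriesOfIdeal_succ,
        LieAlgebra.derivedSeriesOfIdeal_zero]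
    have hgoal : x ∈ Submodule.map (LieSubmodule.toSubmodule R).subtype
        (LieSubmodule.toSubmodule (LieAlgebra.derivedSeries K R 1)) := by
      have hT : Ds ≤ Submodule.span K {m : L | ∃ a ∈ R0, ∃ b ∈ R0, ⁅a, b⁆ = m} := by
        rw [hDspan]
        apply Submodule.span_le.mpr
        rintro m ⟨y, z, rfl⟩
        have hy : y ∈ R0 ⊔ A0 := by rw [hsup]; trivial
        have hz : z ∈ R0 ⊔ A0 := by rw [hsup]; trivial
        obtain ⟨r, hr, a, ha, rfl⟩ := Submodule.mem_sup.mp hy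
        obtain ⟨r', hr', a', ha', rfl⟩ := Submodule.mem_sup.mp hz
        have : ⁅r + a, r' + a'⁆ = ⁅r, r'⁆ := by
          rw [add_lie, hA0Z a ha (r' + a'), lie_add, hA0Z' a' ha' r, add_zero, add_zero]
        rw [this]
        exact Submodule.subset_span ⟨r, hr, r', hr', rfl⟩
      have hTS : Submodule.span K {m : L | ∃ a ∈ R0, ∃ b ∈ R0, ⁅a, b⁆ = m} ≤
          Submodule.map (LieSubmodule.toSubmodule R).subtype
            (LieSubmodule.toSubmodule (LieAlgebra.derivedSeries K R 1)) := by
        apply Submodule.span_le.mpr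
        rintro m ⟨a, ha, b, hb, rfl⟩
        refine ⟨⁅(⟨a, ha⟩ : R), (⟨b, hb⟩ : R)⁆, ?_, rfl⟩
        rw [hD1R, LieSubmodule.lieIdeal_oper_eq_linear_span]
        exact Submodule.subset_span
          ⟨⟨⟨a, ha⟩, LieSubmodule.mem_top _⟩, ⟨⟨b, hb⟩, LieSubmodule.mem_top _⟩, rfl⟩
      exact hTS (hT hxD)
    obtain ⟨m, hm, hmx⟩ := hgoal
    have : m = ⟨x, hx⟩ := Subtype.ext hmx
    rwa [this] at hm
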